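/- Any two bases of a root system are conjugate under its Weyl group: if Δ and Δ' are two bases (sets of simple roots) of a reduced root system Φ in a Euclidean space, then there exists an element w of the Weyl group W(Φ) with w(Δ) = Δ'. -/

import Mathlib

set_option linter.unusedSectionVars false


variable {V : Type*} [NormedAddCommGroup V] [InnerProductSpace ℝ V] [FiniteDimensional ℝ V]

/-- The Weyl group of a set `Φ` of roots in a Euclidean space: the subgroup of linear
automorphisms generated by the reflections `s_α`, `α ∈ Φ`,
where `s_α x = x - (2⟪x,α⟫/⟪α,α⟫) • α`. -/
def weylGroup (Φ : Set V) : Subgroup (V ≃ₗ[ℝ] V) :=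
  Subgroup.closure
    {g | ∃ α ∈ Φ, ∀ x : V, g x = x - (2 * (inner ℝ x α : ℝ) / (inner ℝ α α : ℝ)) • α}

/-- A base (set of simple roots) of `Φ`: a linearly independent subset of `Φ` such that every
root is a nonnegative-integer or nonpositive-integer combination of the base. -/
def IsBase (Φ Δ : Set V) : Prop :=
  Δ ⊆ Φ ∧ LinearIndependent ℝ ((↑) : Δ → V) ∧
    ∀ β ∈ Φ, (∃ c : Δ →₀ ℕ, β = c.sum fun a k => (k : ℝ) • (a : V)) ∨
      (∃ c : Δ →₀ ℕ, β = - c.sum fun a k => (k : ℝ) • (a : V))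

noncomputable def cf (α : V) : Module.Dual ℝ V where
  toFun x := 2 * (inner ℝ x α : ℝ) / (inner ℝ α α : ℝ)
  map_add' x y := by simp [inner_add_left]; ring
  map_smul' t x := by simp [real_inner_smul_left]; ring

lemma cf_self {α : V} (h : α ≠ 0) : cf α α = 2 := by
  have : (inner ℝ α α : ℝ) ≠ 0 := inner_self_ne_zero.mpr h
  simp only [cf, LinearMap.coe_mk, AddHom.coe_mk]
  field_simp

noncomputable def refl' {α : V} (h : α ≠ 0) : V ≃ₗ[ℝ] V := Module.reflection (cf_self h)

lemma refl'_apply {α : V} (h : α ≠ 0) (x : V) :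
    refl' h x = x - (2 * (inner ℝ x α : ℝ) / (inner ℝ α α : ℝ)) • α := by
  rw [refl', Module.reflection_apply]; rfl

lemma refl'_invol {α : V} (h : α ≠ 0) : Function.Involutive (refl' h) :=
  Module.involutive_reflection (cf_self h)

lemma refl'_symm {α : V} (h : α ≠ 0) : (refl' h).symm = refl' h := by
  ext x
  exact (refl' h).injective (by rw [(refl' h).apply_symm_apply, refl'_invol h])

lemma refl'_mem {Φ : Set V} {α : V} (hα : α ∈ Φ) (h : α ≠ 0) : refl' h ∈ weylGroup Φ :=
  Subgroup.subset_closure ⟨α, hα, refl'_apply h⟩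

lemma refl'_self {α : V} (h : α ≠ 0) : refl' h α = -α := by
  have : (inner ℝ α α : ℝ) ≠ 0 := inner_self_ne_zero.mpr h
  rw [refl'_apply]
  have h2 : (2 * (inner ℝ α α : ℝ) / (inner ℝ α α : ℝ)) = 2 := by field_simp
  rw [h2, two_smul]; abel

lemma weyl_maps_root {Φ : Set V} (h0 : (0:V) ∉ Φ)
    (hrefl : ∀ α ∈ Φ, ∀ β ∈ Φ, β - (2 * (inner ℝ β α : ℝ) / (inner ℝ α α : ℝ)) • α ∈ Φ)
    {w : V ≃ₗ[ℝ] V} (hw : w ∈ weylGroup Φ) :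
    (∀ β ∈ Φ, w β ∈ Φ) ∧ (∀ β ∈ Φ, w.symm β ∈ Φ) := by
  induction hw using Subgroup.closure_induction with
  | mem g hg =>
      obtain ⟨α, hα, hgx⟩ := hg
      have hα0 : α ≠ 0 := fun h => h0 (h ▸ hα)
      have hg' : g = refl' hα0 := by
        ext x; rw [hgx x, refl'_apply]
      constructor
      · intro β hβ; rw [hgx β]; exact hrefl α hα β hβ
      · intro β hβ
        rw [hg', refl'_symm, refl'_apply]
        exact hrefl α hα β hβ
  | one => exact ⟨fun β hβ => hβ, fun β hβ => hβ⟩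
  | mul x y hx hy ihx ihy =>
      exact ⟨fun β hβ => ihx.1 _ (ihy.1 β hβ), fun β hβ => ihy.2 _ (ihx.2 β hβ)⟩
  | inv x hx ih => exact ⟨ih.2, ih.1⟩

noncomputable def nsum {Δ : Set V} (c : Δ →₀ ℕ) : V := c.sum fun a k => (k : ℝ) • (a : V)

def Pos (Δ : Set V) (β : V) : Prop := ∃ c : Δ →₀ ℕ, β = nsum c

lemma nsum_add {Δ : Set V} (c d : Δ →₀ ℕ) : nsum (c + d) = nsum c + nsum d := by
  unfold nsum
  rw [Finsupp.sum_add_index']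
  · intro a; simp
  · intro a k₁ k₂; push_cast; rw [add_smul]

lemma nsum_single {Δ : Set V} (a : Δ) (k : ℕ) :
    nsum (Finsupp.single a k) = (k : ℝ) • (a : V) := by
  unfold nsum; rw [Finsupp.sum_single_index]; simp

lemma nsum_zero {Δ : Set V} : nsum (0 : Δ →₀ ℕ) = 0 := by
  unfold nsum; simp

noncomputable def rcast {Δ : Set V} (c : Δ →₀ ℕ) : Δ →₀ ℝ :=
  c.mapRange Nat.cast Nat.cast_zero

lemma nsum_eq_lc {Δ : Set V} (c : Δ →₀ ℕ) :
    nsum c = Finsupp.linearCombination ℝ (Subtype.val : Δ → V) (rcast c) := by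
  rw [Finsupp.linearCombination_apply, rcast, Finsupp.sum_mapRange_index (by simp)]
  rfl

lemma pos_iff_closure {Δ : Set V} {β : V} : Pos Δ β ↔ β ∈ AddSubmonoid.closure Δ := by
  constructor
  · rintro ⟨c, rfl⟩
    unfold nsum
    refine AddSubmonoid.sum_mem _ fun a _ => ?_
    show ((c a : ℝ)) • (a : V) ∈ _
    rw [Nat.cast_smul_eq_nsmul]
    exact AddSubmonoid.nsmul_mem _ (AddSubmonoid.subset_closure a.2) _
  · intro hβ
    induction hβ using AddSubmonoid.closure_induction with
    | mem x hx => exact ⟨Finsupp.single ⟨x, hx⟩ 1, by simp [nsum_single]⟩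
    | zero => exact ⟨0, nsum_zero.symm⟩
    | add x y _ _ ihx ihy =>
        obtain ⟨c, rfl⟩ := ihx; obtain ⟨d, rfl⟩ := ihy
        exact ⟨c + d, (nsum_add c d).symm⟩

lemma Pos.add {Δ : Set V} {β γ : V} (hβ : Pos Δ β) (hγ : Pos Δ γ) : Pos Δ (β + γ) := by
  rw [pos_iff_closure] at *; exact add_mem hβ hγ

lemma pos_mem {Δ : Set V} {a : V} (ha : a ∈ Δ) : Pos Δ a :=
  pos_iff_closure.mpr (AddSubmonoid.subset_closure ha)

lemma nsum_eq_zero {Δ : Set V} (hli : LinearIndependent ℝ ((↑) : Δ → V))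
    {c : Δ →₀ ℕ} (h : nsum c = 0) : c = 0 := by
  have h2 : rcast c = 0 := linearIndependent_iff.mp hli _ ((nsum_eq_lc c).symm.trans h)
  ext a
  have := DFunLike.congr_fun h2 a
  simpa [rcast] using this

lemma pos_neg_false {Δ : Set V} (hli : LinearIndependent ℝ ((↑) : Δ → V))
    {β : V} (hβ0 : β ≠ 0) (h1 : Pos Δ β) (h2 : Pos Δ (-β)) : False := by
  obtain ⟨c, hc⟩ := h1; obtain ⟨d, hd⟩ := h2
  have : nsum (c + d) = 0 := by rw [nsum_add, ← hc, ← hd]; abel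
  have h0 : c + d = 0 := nsum_eq_zero hli this
  have hc0 : c = 0 := by
    ext a
    have := DFunLike.congr_fun h0 a
    simp only [Finsupp.add_apply, Finsupp.zero_apply] at this ⊢
    omega
  exact hβ0 (by rw [hc, hc0, nsum_zero])

lemma coords_zero {Δ : Set V} (hli : LinearIndependent ℝ ((↑) : Δ → V))
    {c : Δ →₀ ℕ} {α : Δ} {r : ℝ} (h : nsum c = r • (α : V)) :
    ∀ b : Δ, b ≠ α → c b = 0 := by
  intro b hb
  have hl : Finsupp.linearCombination ℝ (Subtype.val : Δ → V)
      (rcast c - r • Finsupp.single α 1) = 0 := by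
    rw [map_sub, ← nsum_eq_lc, h, map_smul, Finsupp.linearCombination_single, one_smul,
      sub_self]
  have h2 := linearIndependent_iff.mp hli _ hl
  have := DFunLike.congr_fun h2 b
  have hsb : (Finsupp.single α (1:ℝ)) b = 0 := Finsupp.single_eq_of_ne' (Ne.symm hb)
  simp only [Finsupp.sub_apply, Finsupp.smul_apply, hsb, smul_zero, sub_zero,
    Finsupp.zero_apply, rcast, Finsupp.mapRange_apply] at this
  exact_mod_cast this

variable {Φ : Set V}

lemma root_ne_zero (h0 : (0:V) ∉ Φ) {β : V} (hβ : β ∈ Φ) : β ≠ 0 := fun h => h0 (h ▸ hβ)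

lemma neg_mem (h0 : (0:V) ∉ Φ)
    (hrefl : ∀ α ∈ Φ, ∀ β ∈ Φ, β - (2 * (inner ℝ β α : ℝ) / (inner ℝ α α : ℝ)) • α ∈ Φ)
    {β : V} (hβ : β ∈ Φ) : -β ∈ Φ := by
  have h2 : (2 * (inner ℝ β β : ℝ) / (inner ℝ β β : ℝ)) = 2 := by
    have : (inner ℝ β β : ℝ) ≠ 0 := inner_self_ne_zero.mpr (root_ne_zero h0 hβ)
    field_simp
  have := hrefl β hβ β hβ
  rw [h2, two_smul] at this
  convert this using 1; abel

lemma pos_total {Δ : Set V} (hΔ : IsBase Φ Δ) {β : V} (hβ : β ∈ Φ) :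
    Pos Δ β ∨ Pos Δ (-β) := by
  rcases hΔ.2.2 β hβ with ⟨c, hc⟩ | ⟨c, hc⟩
  · exact Or.inl ⟨c, hc⟩
  · exact Or.inr ⟨c, by rw [hc, neg_neg]; rfl⟩

lemma not_pos_both {Δ : Set V} (hΔ : IsBase Φ Δ) (h0 : (0:V) ∉ Φ) {β : V} (hβ : β ∈ Φ)
    (h1 : Pos Δ β) (h2 : Pos Δ (-β)) : False :=
  pos_neg_false hΔ.2.1 (root_ne_zero h0 hβ) h1 h2

/-- Core lemma: a simple reflection sends positive roots other than `α` to positive roots. -/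
lemma refl_pos (h0 : (0:V) ∉ Φ)
    (hrefl : ∀ α ∈ Φ, ∀ β ∈ Φ, β - (2 * (inner ℝ β α : ℝ) / (inner ℝ α α : ℝ)) • α ∈ Φ)
    (hred : ∀ α ∈ Φ, ∀ t : ℝ, t • α ∈ Φ → t = 1 ∨ t = -1)
    {Δ : Set V} (hΔ : IsBase Φ Δ) {α : V} (hαΔ : α ∈ Δ) (hα0 : α ≠ 0)
    {β : V} (hβ : β ∈ Φ) (hβpos : Pos Δ β) (hβα : β ≠ α) : Pos Δ (refl' hα0 β) := by
  have hαΦ : α ∈ Φ := hΔ.1 hαΔ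
  have hσβ : refl' hα0 β ∈ Φ := by rw [refl'_apply]; exact hrefl α hαΦ β hβ
  rcases pos_total hΔ hσβ with h | h
  · exact h
  exfalso
  obtain ⟨c, hc⟩ := hβpos
  obtain ⟨d, hd⟩ := h
  set r : ℝ := 2 * (inner ℝ β α : ℝ) / (inner ℝ α α : ℝ) with hr
  have hsum : nsum (c + d) = r • α := by
    rw [nsum_add, ← hc, ← hd, refl'_apply]
    abel
  set α' : Δ := ⟨α, hαΔ⟩ with hα'
  have hz := coords_zero hΔ.2.1 (α := α') hsum
  have hcz : ∀ b : Δ, b ≠ α' → c b = 0 := by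
    intro b hb
    have := hz b hb
    simp only [Finsupp.add_apply] at this
    omega
  obtain ⟨n, hn⟩ : ∃ n, c α' = n := ⟨_, rfl⟩
  have hcs : c = Finsupp.single α' n := by
    ext b
    rcases eq_or_ne b α' with rfl | hb
    · simp [hn]
    · rw [hcz b hb, Finsupp.single_eq_of_ne' (Ne.symm hb)]
  have hβα' : β = (n : ℝ) • α := by rw [hc, hcs, nsum_single]
  rcases hred α hαΦ _ (hβα' ▸ hβ) with h1 | h1
  · exact hβα (by rw [hβα', h1, one_smul])
  · have : (0:ℝ) ≤ (n : ℝ) := Nat.cast_nonneg _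
    rw [h1] at this; linarith

lemma refl_pos_iff (h0 : (0:V) ∉ Φ)
    (hrefl : ∀ α ∈ Φ, ∀ β ∈ Φ, β - (2 * (inner ℝ β α : ℝ) / (inner ℝ α α : ℝ)) • α ∈ Φ)
    (hred : ∀ α ∈ Φ, ∀ t : ℝ, t • α ∈ Φ → t = 1 ∨ t = -1)
    {Δ : Set V} (hΔ : IsBase Φ Δ) {α : V} (hαΔ : α ∈ Δ) (hα0 : α ≠ 0)
    {β : V} (hβ : β ∈ Φ) :
    Pos Δ (refl' hα0 β) ↔ ((Pos Δ β ∧ β ≠ α) ∨ β = -α) := by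
  have hαΦ : α ∈ Φ := hΔ.1 hαΔ
  have hσβ : refl' hα0 β ∈ Φ := by rw [refl'_apply]; exact hrefl α hαΦ β hβ
  constructor
  · intro hp
    rcases eq_or_ne β (-α) with rfl | hne
    · exact Or.inr rfl
    refine Or.inl ⟨?_, ?_⟩
    · by_contra hnp
      rcases pos_total hΔ hβ with h | h
      · exact hnp h
      have hnβ : -β ∈ Φ := neg_mem h0 hrefl hβ
      have hnβα : -β ≠ α := fun hh => hne (by rw [← hh]; abel)
      have := refl_pos h0 hrefl hred hΔ hαΔ hα0 hnβ h hnβα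
      rw [map_neg] at this
      exact not_pos_both hΔ h0 hσβ hp this
    · rintro rfl
      rw [refl'_self] at hp
      exact not_pos_both hΔ h0 (neg_mem h0 hrefl hαΦ) hp (by simpa using pos_mem hαΔ)
  · rintro (⟨hp, hne⟩ | rfl)
    · exact refl_pos h0 hrefl hred hΔ hαΔ hα0 hβ hp hne
    · rw [map_neg, refl'_self, neg_neg]
      exact pos_mem hαΔ


/-! Images of bases under Weyl group elements -/

lemma pos_image {Δ : Set V} (g : V ≃ₗ[ℝ] V) {β : V} :
    Pos (⇑g '' Δ) β ↔ Pos Δ (g.symm β) := by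
  rw [pos_iff_closure, pos_iff_closure]
  have hmap : AddSubmonoid.closure (⇑g '' Δ)
      = AddSubmonoid.map (g : V →+ V) (AddSubmonoid.closure Δ) := by
    rw [AddMonoidHom.map_mclosure]
    rfl
  rw [hmap]
  constructor
  · rintro ⟨x, hx, rfl⟩
    simpa using hx
  · intro h
    exact ⟨g.symm β, h, by simp⟩

lemma isBase_image {Δ : Set V} (h0 : (0:V) ∉ Φ)
    (hrefl : ∀ α ∈ Φ, ∀ β ∈ Φ, β - (2 * (inner ℝ β α : ℝ) / (inner ℝ α α : ℝ)) • α ∈ Φ)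
    (hΔ : IsBase Φ Δ) {w : V ≃ₗ[ℝ] V} (hw : w ∈ weylGroup Φ) :
    IsBase Φ (⇑w '' Δ) := by
  obtain ⟨hmf, hms⟩ := weyl_maps_root h0 hrefl hw
  refine ⟨?_, ?_, ?_⟩
  · rintro x ⟨a, ha, rfl⟩
    exact hmf a (hΔ.1 ha)
  · have h1 : LinearIndependent ℝ (⇑(w : V →ₗ[ℝ] V) ∘ ((↑) : Δ → V)) :=
      hΔ.2.1.map' _ w.ker
    have h2 := h1.comp _ (Equiv.Set.image ⇑w Δ w.injective).symm.injective
    convert h2 using 1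
    funext y
    show (y : V) = w ((((Equiv.Set.image ⇑w Δ w.injective).symm y) : Δ) : V)
    have := congrArg (Subtype.val) ((Equiv.Set.image ⇑w Δ w.injective).apply_symm_apply y)
    rw [← this, Equiv.Set.image_apply]
  · intro β hβ
    have hβ' : w.symm β ∈ Φ := hms β hβ
    have key : ∀ c : Δ →₀ ℕ, w (nsum c)
        = nsum (Finsupp.equivMapDomain (Equiv.Set.image ⇑w Δ w.injective) c) := by
      intro c
      rw [nsum, map_finsuppSum]
      rw [nsum, Finsupp.sum_equivMapDomain]
      refine Finsupp.sum_congr fun a _ => ?_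
      rw [map_smul, Equiv.Set.image_apply]
    rcases hΔ.2.2 _ hβ' with ⟨c, hc⟩ | ⟨c, hc⟩
    · left
      refine ⟨Finsupp.equivMapDomain (Equiv.Set.image ⇑w Δ w.injective) c, ?_⟩
      have := congrArg w (congrArg id hc)
      simp only [id] at this
      rw [show (c.sum fun a k => (k:ℝ) • (a:V)) = nsum c from rfl, key c] at this
      show β = nsum _
      rw [← this]; simp
    · right
      refine ⟨Finsupp.equivMapDomain (Equiv.Set.image ⇑w Δ w.injective) c, ?_⟩
      have := congrArg w (congrArg id hc)
      simp only [id, map_neg] at this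
      rw [show (c.sum fun a k => (k:ℝ) • (a:V)) = nsum c from rfl, key c] at this
      show β = -nsum _
      rw [← this]; simp


/-! Equal positive systems give equal bases -/

lemma nsum_mem_span {Δ : Set V} (c : Δ →₀ ℕ) : nsum c ∈ Submodule.span ℝ Δ := by
  refine Submodule.sum_mem _ fun a _ => ?_
  exact Submodule.smul_mem _ _ (Submodule.subset_span a.2)

lemma base_subset (h0 : (0:V) ∉ Φ) (hspan : Submodule.span ℝ Φ = ⊤)
    {Δ Δ' : Set V} (hΔ : IsBase Φ Δ) (hΔ' : IsBase Φ Δ')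
    (hPP : ∀ β ∈ Φ, (Pos Δ β ↔ Pos Δ' β)) : Δ ⊆ Δ' := by
  -- Δ spans V
  have hsp : ⊤ ≤ Submodule.span ℝ (Set.range ((↑) : Δ → V)) := by
    rw [Subtype.range_coe, ← hspan]
    refine Submodule.span_le.mpr fun β hβ => ?_
    rcases pos_total hΔ hβ with ⟨c, hc⟩ | ⟨c, hc⟩
    · exact hc ▸ nsum_mem_span c
    · have : -β ∈ Submodule.span ℝ Δ := hc ▸ nsum_mem_span c
      simpa using Submodule.neg_mem _ this
  set B : Module.Basis Δ ℝ V := Module.Basis.mk hΔ.2.1 hsp with hB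
  set ht : V →ₗ[ℝ] ℝ :=
    (Finsupp.linearCombination ℝ fun _ : Δ => (1:ℝ)) ∘ₗ (B.repr : V ≃ₗ[ℝ] (Δ →₀ ℝ)).toLinearMap
    with hht
  have ht_base : ∀ a : Δ, ht (a : V) = 1 := by
    intro a
    have h1 : (a : V) = B a := by rw [hB, Module.Basis.mk_apply]
    rw [hht]
    simp only [LinearMap.coe_comp, Function.comp_apply, LinearEquiv.coe_coe]
    rw [h1, Module.Basis.repr_self, Finsupp.linearCombination_single, smul_eq_mul, mul_one]
  have ht_nsum : ∀ c : Δ →₀ ℕ, ht (nsum c) = ((c.sum fun _ k => k : ℕ) : ℝ) := by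
    intro c
    rw [nsum, map_finsuppSum]
    simp only [Finsupp.sum]
    rw [Nat.cast_sum]
    refine Finset.sum_congr rfl fun a _ => ?_
    rw [map_smul, ht_base a, smul_eq_mul, mul_one]
  -- every Δ-positive root has height ≥ 1
  have ht_ge1 : ∀ β ∈ Φ, Pos Δ β → 1 ≤ ht β := by
    intro β hβ ⟨d, hd⟩
    rw [hd, ht_nsum]
    have hd0 : d ≠ 0 := by
      rintro rfl
      exact root_ne_zero h0 hβ (by rw [hd, nsum_zero])
    have : 1 ≤ (d.sum fun _ k => k) := by
      by_contra hlt
      push_neg at hlt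
      interval_cases h : (d.sum fun _ k => k)
      · have : ∀ a ∈ d.support, d a = 0 := by
          intro a ha
          exact (Finset.sum_eq_zero_iff).mp h a ha
        exact hd0 (Finsupp.ext fun a => by
          by_cases ha : a ∈ d.support
          · exact this a ha
          · exact Finsupp.notMem_support_iff.mp ha)
    exact_mod_cast this
  intro a ha
  have haΦ : (a : V) ∈ Φ := hΔ.1 ha
  have ha0 : a ≠ (0:V) := root_ne_zero h0 haΦ
  obtain ⟨c, hc⟩ : Pos Δ' a := (hPP a haΦ).mp (pos_mem ha)
  -- height computation
  have hta : ht a = 1 := ht_base ⟨a, ha⟩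
  have hexp : ht a = c.sum fun b k => (k : ℝ) * ht (b : V) := by
    rw [hc, nsum, map_finsuppSum]
    refine Finsupp.sum_congr fun b _ => ?_
    rw [map_smul, smul_eq_mul]
  have hb1 : ∀ b : Δ', b ∈ c.support → 1 ≤ ht (b : V) := by
    intro b _
    have hbΦ : (b : V) ∈ Φ := hΔ'.1 b.2
    exact ht_ge1 b hbΦ ((hPP b hbΦ).mpr (pos_mem b.2))
  have hsumle : ((c.sum fun _ k => k : ℕ) : ℝ) ≤ 1 := by
    rw [← hta, hexp]
    simp only [Finsupp.sum]
    rw [Nat.cast_sum]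
    refine Finset.sum_le_sum fun b hb => ?_
    have := hb1 b hb
    have hk : (0:ℝ) ≤ (c b : ℝ) := Nat.cast_nonneg _
    nlinarith
  have hc0 : c ≠ 0 := by
    rintro rfl
    exact ha0 (by rw [hc, nsum_zero])
  have hsumge : 1 ≤ (c.sum fun _ k => k) := by
    by_contra hlt
    push_neg at hlt
    interval_cases h : (c.sum fun _ k => k)
    · exact hc0 (Finsupp.ext fun b => by
        by_cases hb : b ∈ c.support
        · exact (Finset.sum_eq_zero_iff).mp h b hb
        · exact Finsupp.notMem_support_iff.mp hb)
  have hsum1 : (c.sum fun _ k => k) = 1 := by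
    have : (c.sum fun _ k => k) ≤ 1 := by exact_mod_cast hsumle
    omega
  -- extract the unique element of the support
  obtain ⟨b₀, hb₀⟩ : ∃ b₀, b₀ ∈ c.support := by
    rcases Finset.eq_empty_or_nonempty c.support with h | ⟨b₀, hb₀⟩
    · exact absurd (Finsupp.support_eq_empty.mp h) hc0
    · exact ⟨b₀, hb₀⟩
  classical
  have herase : c b₀ + ∑ x ∈ c.support.erase b₀, c x = 1 := by
    rw [Finset.add_sum_erase _ _ hb₀]; exact hsum1
  have hcb₀1 : c b₀ = 1 := by
    have h1 : 1 ≤ c b₀ := Nat.one_le_iff_ne_zero.mpr (Finsupp.mem_support_iff.mp hb₀)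
    omega
  have hrest : ∀ b : Δ', b ≠ b₀ → c b = 0 := by
    intro b hb
    by_cases hbs : b ∈ c.support
    · have hber : b ∈ c.support.erase b₀ := Finset.mem_erase.mpr ⟨hb, hbs⟩
      have : ∑ x ∈ c.support.erase b₀, c x = 0 := by omega
      exact (Finset.sum_eq_zero_iff).mp this b hber
    · exact Finsupp.notMem_support_iff.mp hbs
  have hcs : c = Finsupp.single b₀ 1 := by
    ext b
    rcases eq_or_ne b b₀ with rfl | hb
    · simp [hcb₀1]
    · rw [hrest b hb, Finsupp.single_eq_of_ne' (Ne.symm hb)]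
  have : (a : V) = b₀ := by rw [hc, hcs, nsum_single, Nat.cast_one, one_smul]
  rw [this]
  exact b₀.2

lemma base_eq (h0 : (0:V) ∉ Φ) (hspan : Submodule.span ℝ Φ = ⊤)
    {Δ Δ' : Set V} (hΔ : IsBase Φ Δ) (hΔ' : IsBase Φ Δ')
    (hPP : ∀ β ∈ Φ, (Pos Δ β ↔ Pos Δ' β)) : Δ = Δ' :=
  Set.Subset.antisymm (base_subset h0 hspan hΔ hΔ' hPP)
    (base_subset h0 hspan hΔ' hΔ fun β hβ => (hPP β hβ).symm)


/-! Main induction -/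

lemma main_induction (hfin : Φ.Finite) (h0 : (0:V) ∉ Φ)
    (hspan : Submodule.span ℝ Φ = ⊤)
    (hrefl : ∀ α ∈ Φ, ∀ β ∈ Φ, β - (2 * (inner ℝ β α : ℝ) / (inner ℝ α α : ℝ)) • α ∈ Φ)
    (hred : ∀ α ∈ Φ, ∀ t : ℝ, t • α ∈ Φ → t = 1 ∨ t = -1) :
    ∀ n : ℕ, ∀ Δ Δ' : Set V, IsBase Φ Δ → IsBase Φ Δ' →
      ({β ∈ Φ | Pos Δ β ∧ Pos Δ' (-β)}).ncard = n →
      ∃ w ∈ weylGroup Φ, ⇑w '' Δ = Δ' := by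
  intro n
  induction n with
  | zero =>
      intro Δ Δ' hΔ hΔ' hcard
      have hSfin : ({β ∈ Φ | Pos Δ β ∧ Pos Δ' (-β)}).Finite :=
        hfin.subset fun x hx => hx.1
      have hS : {β ∈ Φ | Pos Δ β ∧ Pos Δ' (-β)} = ∅ := (Set.ncard_eq_zero hSfin).mp hcard
      have hnotin : ∀ β, β ∉ ({β ∈ Φ | Pos Δ β ∧ Pos Δ' (-β)} : Set V) := by
        rw [hS]; intro β h; exact h
      have hPP : ∀ β ∈ Φ, (Pos Δ β ↔ Pos Δ' β) := by
        intro β hβ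
        constructor
        · intro hp
          rcases pos_total hΔ' hβ with h | h
          · exact h
          · exact absurd ⟨hβ, hp, h⟩ (hnotin β)
        · intro hp
          rcases pos_total hΔ hβ with h | h
          · exact h
          · refine absurd ?_ (hnotin (-β))
            exact ⟨neg_mem h0 hrefl hβ, h, by rwa [neg_neg]⟩
      have := base_eq h0 hspan hΔ hΔ' hPP
      refine ⟨1, (weylGroup Φ).one_mem, ?_⟩
      rw [← this]
      ext x
      simp
  | succ n ih =>
      intro Δ Δ' hΔ hΔ' hcard
      set S := {β ∈ Φ | Pos Δ β ∧ Pos Δ' (-β)} with hSdef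
      have hSfin : S.Finite := hfin.subset fun x hx => hx.1
      -- find a simple root α ∈ Δ with -α ∈ Φ⁺(Δ')
      have hex : ∃ α ∈ Δ, Pos Δ' (-α) := by
        by_contra h
        push_neg at h
        have hsub : Δ ⊆ ↑(AddSubmonoid.closure Δ') := by
          intro a ha
          rcases pos_total hΔ' (hΔ.1 ha) with hp | hp
          · exact pos_iff_closure.mp hp
          · exact absurd hp (h a ha)
        have hmono : ∀ β, Pos Δ β → Pos Δ' β := by
          intro β hβ
          rw [pos_iff_closure] at hβ ⊢
          exact AddSubmonoid.closure_le.mpr hsub hβ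
        have hne : S.Nonempty := Set.nonempty_of_ncard_ne_zero (by omega)
        obtain ⟨β, hβΦ, hβ1, hβ2⟩ := hne
        exact not_pos_both hΔ' h0 hβΦ (hmono β hβ1) hβ2
      obtain ⟨α, hαΔ, hα'⟩ := hex
      have hαΦ : α ∈ Φ := hΔ.1 hαΔ
      have hα0 : α ≠ 0 := root_ne_zero h0 hαΦ
      set σ : V ≃ₗ[ℝ] V := refl' hα0 with hσ
      have hσW : σ ∈ weylGroup Φ := refl'_mem hαΦ hα0
      set Δ₁ : Set V := ⇑σ '' Δ with hΔ₁def
      have hΔ₁ : IsBase Φ Δ₁ := isBase_image h0 hrefl hΔ hσW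
      have hposiff : ∀ β ∈ Φ, (Pos Δ₁ β ↔ ((Pos Δ β ∧ β ≠ α) ∨ β = -α)) := by
        intro β hβ
        rw [hΔ₁def, pos_image, hσ, refl'_symm]
        exact refl_pos_iff h0 hrefl hred hΔ hαΔ hα0 hβ
      have hnotposα : ¬ Pos Δ' α := fun hp =>
        not_pos_both hΔ' h0 hαΦ hp hα'
      have hseq : {β ∈ Φ | Pos Δ₁ β ∧ Pos Δ' (-β)} = S \ {α} := by
        ext β
        simp only [Set.mem_setOf_eq, Set.mem_diff, Set.mem_singleton_iff, hSdef]
        constructor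
        · rintro ⟨hβΦ, hp1, hp2⟩
          rcases (hposiff β hβΦ).mp hp1 with ⟨hp, hne⟩ | rfl
          · exact ⟨⟨hβΦ, hp, hp2⟩, hne⟩
          · rw [neg_neg] at hp2
            exact absurd hp2 hnotposα
        · rintro ⟨⟨hβΦ, hp1, hp2⟩, hne⟩
          exact ⟨hβΦ, (hposiff β hβΦ).mpr (Or.inl ⟨hp1, hne⟩), hp2⟩
      have hαS : α ∈ S := ⟨hαΦ, pos_mem hαΔ, hα'⟩
      have hcard' : ({β ∈ Φ | Pos Δ₁ β ∧ Pos Δ' (-β)}).ncard = n := by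
        rw [hseq, Set.ncard_diff_singleton_of_mem hαS, hcard]
        omega
      obtain ⟨w', hw', hw'Δ⟩ := ih Δ₁ Δ' hΔ₁ hΔ' hcard'
      refine ⟨w' * σ, mul_mem hw' hσW, ?_⟩
      rw [← hw'Δ, hΔ₁def, ← Set.image_comp]
      rfl

/-- Any two bases of a reduced crystallographic root system are conjugate under its
Weyl group. -/
theorem stmt2 (Φ : Set V) (hfin : Φ.Finite) (h0 : (0 : V) ∉ Φ)
    (hspan : Submodule.span ℝ Φ = ⊤)
    (hrefl : ∀ α ∈ Φ, ∀ β ∈ Φ, β - (2 * (inner ℝ β α : ℝ) / (inner ℝ α α : ℝ)) • α ∈ Φ)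
    (hcrys : ∀ α ∈ Φ, ∀ β ∈ Φ, ∃ z : ℤ, (2 * (inner ℝ β α : ℝ) / (inner ℝ α α : ℝ)) = (z : ℝ))
    (hred : ∀ α ∈ Φ, ∀ t : ℝ, t • α ∈ Φ → t = 1 ∨ t = -1)
    (Δ Δ' : Set V) (hΔ : IsBase Φ Δ) (hΔ' : IsBase Φ Δ') :
    ∃ w ∈ weylGroup Φ, (⇑w) '' Δ = Δ' :=
  main_induction hfin h0 hspan hrefl hred
    ({β ∈ Φ | Pos Δ β ∧ Pos Δ' (-β)}).ncard Δ Δ' hΔ hΔ' rfl
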